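/- Let L be a Cayley table of a finite group G of order n. If L contains a maximal partial transversal of length ℓ with ℓ < (3/5)n, then n is even, G contains a subgroup of index 2, and ℓ - n/2 is even. -/
import Mathlib


/-- The Cayley table of a group `G` as a set of triples `(g, h, g*h)`. -/
def cayleyTable (G : Type*) [Group G] [Fintype G] [DecidableEq G] :
    Finset (G × G × G) :=
  Finset.univ.image (fun p : G × G => (p.1, p.2, p.1 * p.2))

/-- A partial transversal: a subset of the triples with pairwise distinct
rows, columns and symbols. -/
def IsPartialTransversal {α β γ : Type*} (L T : Finset (α × β × γ)) : Prop :=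
  T ⊆ L ∧ ∀ t ∈ T, ∀ t' ∈ T, t ≠ t' →
    t.1 ≠ t'.1 ∧ t.2.1 ≠ t'.2.1 ∧ t.2.2 ≠ t'.2.2

/-- A maximal partial transversal. -/
def IsMaximalPartialTransversal {α β γ : Type*} (L T : Finset (α × β × γ)) : Prop :=
  IsPartialTransversal L T ∧
    ∀ T' : Finset (α × β × γ), IsPartialTransversal L T' → T ⊆ T' → T' = T

section Aux

open Finset

variable {G : Type*} [Group G] [Fintype G] [DecidableEq G]

private lemma card_image_mul_left (g : G) (S : Finset G) :
    (S.image (g * ·)).card = S.card :=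
  Finset.card_image_of_injective _ (mul_right_injective g)

private lemma card_image_mul_right (g : G) (S : Finset G) :
    (S.image (· * g)).card = S.card :=
  Finset.card_image_of_injective _ (mul_left_injective g)

/-- Key structural lemma: if `A, B, C` have size `m > (2/5)|G|` and `AB` avoids `C`,
then there is an index-2 "subgroup" finset `K` with strong coset structure. -/
private lemma key (A B C : Finset G) (m : ℕ)
    (hA : A.card = m) (hB : B.card = m) (hC : C.card = m)
    (hm : 2 * Fintype.card G < 5 * m)
    (hAB : ∀ a ∈ A, ∀ b ∈ B, a * b ∉ C) :
    ∃ K : Finset G,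
      (1 : G) ∈ K ∧
      (∀ g ∈ K, g⁻¹ ∈ K) ∧
      (∀ g ∈ K, ∀ h ∈ K, g * h ∈ K) ∧
      (∀ g h : G, g ∉ K → h ∉ K → g * h ∈ K) ∧
      2 * K.card = Fintype.card G ∧
      m ≤ K.card ∧
      (∀ a ∈ A, ∀ a' ∈ A, a⁻¹ * a' ∈ K) ∧
      (∀ b ∈ B, ∀ b' ∈ B, b * b'⁻¹ ∈ K) ∧
      (∀ a₁ ∈ A, ∀ b₁ ∈ B, ∀ x : G, a₁⁻¹ * (x * b₁⁻¹) ∈ K → x ∉ C) := by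
  set n := Fintype.card G with hn
  have hn1 : 1 ≤ n := Fintype.card_pos
  have hm1 : 1 ≤ m := by omega
  obtain ⟨a₀, ha₀⟩ := Finset.card_pos.1 (by omega : 0 < A.card)
  -- the product set D = A*B
  set D := (A ×ˢ B).image (fun p : G × G => p.1 * p.2) with hD
  have hDsub : D ⊆ Cᶜ := by
    intro x hx
    simp only [hD, mem_image, mem_product] at hx
    obtain ⟨p, ⟨hpa, hpb⟩, rfl⟩ := hx
    simpa using hAB _ hpa _ hpb
  have hs : D.card ≤ n - m := by
    have h1 := card_le_card hDsub
    rwa [card_compl, hC] at h1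
  have hsm : 2 * D.card < 3 * m := by omega
  have haB : ∀ a ∈ A, B.image (a * ·) ⊆ D := by
    intro a ha x hx
    obtain ⟨b, hb, rfl⟩ := mem_image.1 hx
    exact mem_image.2 ⟨(a, b), mem_product.2 ⟨ha, hb⟩, rfl⟩
  have hAb : ∀ b ∈ B, A.image (· * b) ⊆ D := by
    intro b hb x hx
    obtain ⟨a, ha, rfl⟩ := mem_image.1 hx
    exact mem_image.2 ⟨(a, b), mem_product.2 ⟨ha, hb⟩, rfl⟩
  have hmD : m ≤ D.card := by
    have h1 := card_le_card (haB a₀ ha₀)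
    rwa [card_image_mul_left, hB] at h1
  have h2m : 2 * m ≤ n := by omega
  -- helper: cancelling image
  have himg : ∀ (g : G) (S : Finset G), (S.image (g * ·)).image (g⁻¹ * ·) = S := by
    intro g S
    ext x
    simp [Finset.image_image, Function.comp, inv_mul_cancel_left]
  -- intersections of translates of B
  have hinterA : ∀ a ∈ A, ∀ a' ∈ A,
      m < 2 * ((B.image (a * ·)) ∩ (B.image (a' * ·))).card := by
    intro a ha a' ha'
    have h1 := card_inter_add_card_union (B.image (a * ·)) (B.image (a' * ·))
    have h2 : (B.image (a * ·) ∪ B.image (a' * ·)).card ≤ D.card :=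
      card_le_card (union_subset (haB a ha) (haB a' ha'))
    have e1 := card_image_mul_left a B
    have e2 := card_image_mul_left a' B
    omega
  have hinterB : ∀ b ∈ B, ∀ b' ∈ B,
      0 < ((A.image (· * b)) ∩ (A.image (· * b'))).card := by
    intro b hb b' hb'
    have h1 := card_inter_add_card_union (A.image (· * b)) (A.image (· * b'))
    have h2 : (A.image (· * b) ∪ A.image (· * b')).card ≤ D.card :=
      card_le_card (union_subset (hAb b hb) (hAb b' hb'))
    have e1 := card_image_mul_right b A
    have e2 := card_image_mul_right b' A
    omega
  -- the subgroup-to-be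
  set K := univ.filter (fun g : G => m < 2 * ((B.image (g * ·)) ∩ B).card) with hK
  have hKmem : ∀ g : G, g ∈ K ↔ m < 2 * ((B.image (g * ·)) ∩ B).card := by
    intro g; simp [hK]
  have hK1 : ∀ a ∈ A, ∀ a' ∈ A, a⁻¹ * a' ∈ K := by
    intro a ha a' ha'
    rw [hKmem]
    have e1 : B.image ((a⁻¹ * a') * ·) = (B.image (a' * ·)).image (a⁻¹ * ·) := by
      rw [Finset.image_image]
      apply Finset.image_congr
      intro b _
      simp [Function.comp, mul_assoc]
    have e : (B.image ((a⁻¹ * a') * ·)) ∩ B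
        = ((B.image (a' * ·)) ∩ (B.image (a * ·))).image (a⁻¹ * ·) := by
      rw [Finset.image_inter _ _ (mul_right_injective a⁻¹), himg a B, e1]
    rw [e, Finset.card_image_of_injective _ (mul_right_injective _)]
    exact hinterA a' ha' a ha
  have h1K : (1 : G) ∈ K := by
    rw [hKmem]
    have : B.image ((1 : G) * ·) = B := by
      ext x; simp
    rw [this, inter_self, hB]
    omega
  have hKinv : ∀ g ∈ K, g⁻¹ ∈ K := by
    intro g hg
    rw [hKmem] at hg ⊢
    have e : (B.image (g⁻¹ * ·)) ∩ B = ((B.image (g * ·)) ∩ B).image (g⁻¹ * ·) := by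
      rw [Finset.image_inter _ _ (mul_right_injective g⁻¹), himg g B, inter_comm]
    rw [e, Finset.card_image_of_injective _ (mul_right_injective _)] at *
    exact hg
  have hK2 : ∀ b ∈ B, ∀ b' ∈ B, b * b'⁻¹ ∈ K := by
    intro b hb b' hb'
    have hne : ((A.image (· * b)) ∩ (A.image (· * b'))).Nonempty :=
      Finset.card_pos.1 (hinterB b hb b' hb')
    obtain ⟨y, hy⟩ := hne
    rw [mem_inter] at hy
    obtain ⟨a1, ha1, e1⟩ := mem_image.1 hy.1
    obtain ⟨a2, ha2, e2⟩ := mem_image.1 hy.2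
    have he : b * b'⁻¹ = a1⁻¹ * a2 := by
      have h12 : a1 * b = a2 * b' := by rw [e1, e2]
      have h13 : a1 * (b * b'⁻¹) = a2 := by
        rw [← mul_assoc, h12, mul_inv_cancel_right]
      rw [← h13]
      group
    rw [he]
    exact hK1 a1 ha1 a2 ha2
  have hKmul : ∀ g ∈ K, ∀ h ∈ K, g * h ∈ K := by
    intro g hg h hh
    have hg' := hKinv g hg
    rw [hKmem] at hh hg'
    have hXY : (((B.image (h * ·)) ∩ B) ∩ ((B.image (g⁻¹ * ·)) ∩ B)).Nonempty := by
      rw [← Finset.card_pos]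
      have h1 := card_inter_add_card_union ((B.image (h * ·)) ∩ B) ((B.image (g⁻¹ * ·)) ∩ B)
      have h2 : ((B.image (h * ·)) ∩ B) ∪ ((B.image (g⁻¹ * ·)) ∩ B) ⊆ B :=
        union_subset inter_subset_right inter_subset_right
      have h3 := card_le_card h2
      omega
    obtain ⟨y, hy⟩ := hXY
    simp only [mem_inter] at hy
    obtain ⟨⟨hy1, _⟩, ⟨hy2, _⟩⟩ := hy
    obtain ⟨b1, hb1, e1⟩ := mem_image.1 hy1
    obtain ⟨b2, hb2, e2⟩ := mem_image.1 hy2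
    have hy2' : b2 = g * y := by rw [← e2]; group
    have hgy : g * h = b2 * b1⁻¹ := by
      rw [hy2', ← e1]
      group
    rw [hgy]
    exact hK2 b2 hb2 b1 hb1
  have hKlow : m ≤ K.card := by
    have hsub2 : A.image (a₀⁻¹ * ·) ⊆ K := by
      intro x hx
      obtain ⟨a, ha, rfl⟩ := mem_image.1 hx
      exact hK1 a₀ ha₀ a ha
    have := card_le_card hsub2
    rwa [card_image_mul_left, hA] at this
  -- upper bound on K.card by double counting
  have hsum : (∑ g : G, ((B.image (g * ·)) ∩ B).card) = m * m := by
    have e : ∀ g : G, ((B.image (g * ·)) ∩ B).card = (B.filter (fun b => g * b ∈ B)).card := by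
      intro g
      rw [← Finset.card_image_of_injective (B.filter _) (mul_right_injective g)]
      congr 1
      ext x
      simp only [mem_inter, mem_image, mem_filter]
      constructor
      · rintro ⟨⟨b, hb, rfl⟩, hx⟩
        exact ⟨b, ⟨hb, hx⟩, rfl⟩
      · rintro ⟨b, ⟨hb, hgb⟩, rfl⟩
        exact ⟨⟨b, hb, rfl⟩, hgb⟩
    simp_rw [e, Finset.card_filter]
    rw [Finset.sum_comm]
    have e2 : ∀ b : G, (∑ g : G, if g * b ∈ B then 1 else 0) = m := by
      intro b
      rw [← Finset.card_filter]
      have e3 : univ.filter (fun g => g * b ∈ B) = B.image (· * b⁻¹) := by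
        ext g
        simp only [mem_filter, mem_univ, true_and, mem_image]
        constructor
        · intro h; exact ⟨g * b, h, by group⟩
        · rintro ⟨b', hb', rfl⟩
          simpa [mul_assoc] using hb'
      rw [e3, card_image_mul_right, hB]
    rw [Finset.sum_congr rfl (fun b _ => e2 b), Finset.sum_const, hB, smul_eq_mul]
  have hKup : K.card * (m + 1) ≤ 2 * (m * m) := by
    have h1 : (∑ _g ∈ K, (m + 1)) ≤ ∑ g ∈ K, 2 * ((B.image (g * ·)) ∩ B).card := by
      apply Finset.sum_le_sum
      intro g hg
      rw [hKmem] at hg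
      omega
    have h2 : (∑ g ∈ K, 2 * ((B.image (g * ·)) ∩ B).card)
        ≤ ∑ g : G, 2 * ((B.image (g * ·)) ∩ B).card :=
      Finset.sum_le_sum_of_subset (subset_univ K)
    rw [Finset.sum_const, smul_eq_mul] at h1
    simp only [← Finset.mul_sum] at h1 h2
    rw [hsum] at h2
    omega
  have hKlt : K.card < 2 * m := by
    by_contra hcon
    push_neg at hcon
    have h1 : 2 * m * (m + 1) ≤ K.card * (m + 1) := Nat.mul_le_mul_right _ hcon
    nlinarith
  -- K.card divides n via subgroup structure
  have hKdvd : K.card ∣ n := by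
    let Ksub : Subgroup G :=
      { carrier := ↑K
        one_mem' := by simpa using h1K
        mul_mem' := fun hx hy => hKmul _ hx _ hy
        inv_mem' := fun hx => hKinv _ hx }
    have h1 : Nat.card Ksub = K.card := by
      have : Nat.card Ksub = Nat.card (↑K : Set G) := rfl
      rw [this, Nat.card_coe_set_eq, Set.ncard_coe_finset]
    have h2 := Subgroup.card_subgroup_dvd_card Ksub
    rwa [h1, Nat.card_eq_fintype_card] at h2
  have h2k : 2 * K.card = n := by
    obtain ⟨t, ht⟩ := hKdvd
    have hkpos : 1 ≤ K.card := le_trans hm1 hKlow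
    have hub : 2 * (K.card * t) < 5 * K.card := by
      calc 2 * (K.card * t) = 2 * n := by rw [← ht]
        _ < 5 * m := hm
        _ ≤ 5 * K.card := by omega
    have htle : 2 * t < 5 := by
      have h5 : K.card * (2 * t) < K.card * 5 := by
        calc K.card * (2 * t) = 2 * (K.card * t) := by ring
          _ < 5 * K.card := hub
          _ = K.card * 5 := by ring
      exact Nat.lt_of_mul_lt_mul_left h5
    have hlbn : K.card < K.card * t := by
      calc K.card < 2 * m := hKlt
        _ ≤ n := h2m
        _ = K.card * t := ht
    have htge : 2 ≤ t := by
      by_contra hcon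
      push_neg at hcon
      interval_cases t <;> omega
    have ht2 : t = 2 := by omega
    rw [ht, ht2]; ring
  -- complement multiplication property
  have hKcompl : ∀ g h : G, g ∉ K → h ∉ K → g * h ∈ K := by
    intro g h hg hh
    have hginv : g⁻¹ ∉ K := by
      intro hc
      exact hg (by simpa using hKinv _ hc)
    have hdisj : Disjoint K (K.image (g⁻¹ * ·)) := by
      rw [Finset.disjoint_right]
      rintro x hx hxK
      obtain ⟨y, hy, rfl⟩ := mem_image.1 hx
      have := hKmul _ hxK _ (hKinv y hy)
      simp only [mul_inv_cancel_right] at this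
      exact hginv this
    have hcov : K ∪ K.image (g⁻¹ * ·) = univ := by
      apply Finset.eq_univ_of_card
      rw [Finset.card_union_of_disjoint hdisj, card_image_mul_left]
      omega
    have hmem2 : h ∈ K.image (g⁻¹ * ·) := by
      have h2 := Finset.mem_univ h
      rw [← hcov, mem_union] at h2
      tauto
    obtain ⟨y, hy, he⟩ := mem_image.1 hmem2
    have : g * h = y := by rw [← he]; group
    rwa [this]
  -- the coset-covering property
  have hlast : ∀ a₁ ∈ A, ∀ b₁ ∈ B, ∀ x : G, a₁⁻¹ * (x * b₁⁻¹) ∈ K → x ∉ C := by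
    intro a₁ ha₁ b₁ hb₁ x hw hxC
    have hPsub : A.image (fun a => a⁻¹ * x) ⊆ K.image (· * b₁) := by
      intro z hz
      obtain ⟨a, ha, rfl⟩ := mem_image.1 hz
      refine mem_image.2 ⟨(a⁻¹ * a₁) * (a₁⁻¹ * (x * b₁⁻¹)),
        hKmul _ (hK1 a ha a₁ ha₁) _ hw, ?_⟩
      group
    have hBsub : B ⊆ K.image (· * b₁) := by
      intro b hb
      exact mem_image.2 ⟨b * b₁⁻¹, hK2 b hb b₁ hb₁, by group⟩
    have hPcard : (A.image (fun a => a⁻¹ * x)).card = m := by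
      rw [Finset.card_image_of_injective _ ?_, hA]
      intro u v huv
      exact inv_injective (mul_left_injective x huv)
    have hne : ((A.image (fun a => a⁻¹ * x)) ∩ B).Nonempty := by
      rw [← Finset.card_pos]
      have h1 := card_inter_add_card_union (A.image (fun a => a⁻¹ * x)) B
      have h2 : (A.image (fun a => a⁻¹ * x)) ∪ B ⊆ K.image (· * b₁) :=
        union_subset hPsub hBsub
      have h3 := card_le_card h2
      rw [card_image_mul_right] at h3
      omega
    obtain ⟨y, hy⟩ := hne
    rw [mem_inter] at hy
    obtain ⟨a, ha, he⟩ := mem_image.1 hy.1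
    have hx : x = a * y := by rw [← he]; group
    exact hAB a ha y hy.2 (hx ▸ hxC)
  exact ⟨K, h1K, hKinv, hKmul, hKcompl, h2k, hKlow, hK1, hK2, hlast⟩

end Aux

theorem stmt13 {G : Type*} [Group G] [Fintype G] [DecidableEq G]
    (T : Finset (G × G × G))
    (hT : IsMaximalPartialTransversal (cayleyTable G) T)
    (hlen : 5 * T.card < 3 * Fintype.card G) :
    Even (Fintype.card G) ∧ (∃ H : Subgroup G, H.index = 2) ∧
      Even (T.card - Fintype.card G / 2) := by
  classical
  open Finset in
  obtain ⟨⟨hsub, hdist⟩, hmax⟩ := hT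
  set n := Fintype.card G with hn
  set ℓ := T.card with hℓ
  -- injectivity of coordinate maps on T
  have hinj1 : ∀ t ∈ T, ∀ t' ∈ T, t.1 = t'.1 → t = t' := by
    intro t ht t' ht' he
    by_contra hne
    exact (hdist t ht t' ht' hne).1 he
  have hinj2 : ∀ t ∈ T, ∀ t' ∈ T, t.2.1 = t'.2.1 → t = t' := by
    intro t ht t' ht' he
    by_contra hne
    exact (hdist t ht t' ht' hne).2.1 he
  have hinj3 : ∀ t ∈ T, ∀ t' ∈ T, t.2.2 = t'.2.2 → t = t' := by
    intro t ht t' ht' he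
    by_contra hne
    exact (hdist t ht t' ht' hne).2.2 he
  set Rows := T.image (fun t : G × G × G => t.1) with hRows
  set Cols := T.image (fun t : G × G × G => t.2.1) with hCols
  set Syms := T.image (fun t : G × G × G => t.2.2) with hSyms
  have hRcard : Rows.card = ℓ := Finset.card_image_of_injOn hinj1
  have hCcard : Cols.card = ℓ := Finset.card_image_of_injOn hinj2
  have hScard : Syms.card = ℓ := Finset.card_image_of_injOn hinj3
  have hℓn : ℓ ≤ n := by
    rw [← hRcard]
    exact le_trans (Finset.card_le_univ Rows) (le_of_eq (Finset.card_univ))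
  set m := n - ℓ with hm
  set A := Rowsᶜ with hA
  set B := Colsᶜ with hB
  set C := Symsᶜ with hC
  have hAcard : A.card = m := by rw [hA, Finset.card_compl, hRcard]
  have hBcard : B.card = m := by rw [hB, Finset.card_compl, hCcard]
  have hCcard' : C.card = m := by rw [hC, Finset.card_compl, hScard]
  have hmn : 2 * n < 5 * m := by omega
  -- maximality: products of uncovered row/column are covered symbols
  have hABC : ∀ a ∈ A, ∀ b ∈ B, a * b ∉ C := by
    intro g hg h hh hgh
    rw [hA, Finset.mem_compl] at hg
    rw [hB, Finset.mem_compl] at hh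
    rw [hC, Finset.mem_compl] at hgh
    set tr : G × G × G := (g, h, g * h) with htr
    have htr_mem : tr ∈ cayleyTable G :=
      Finset.mem_image.2 ⟨(g, h), Finset.mem_univ _, rfl⟩
    have hPT' : IsPartialTransversal (cayleyTable G) (insert tr T) := by
      constructor
      · exact Finset.insert_subset htr_mem hsub
      · intro t ht t' ht' hne
        rcases Finset.mem_insert.1 ht with rfl | htT
        · rcases Finset.mem_insert.1 ht' with rfl | ht'T
          · exact absurd rfl hne
          · refine ⟨?_, ?_, ?_⟩
            · intro he
              exact hg (Finset.mem_image.2 ⟨t', ht'T, he.symm⟩)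
            · intro he
              exact hh (Finset.mem_image.2 ⟨t', ht'T, he.symm⟩)
            · intro he
              exact hgh (Finset.mem_image.2 ⟨t', ht'T, he.symm⟩)
        · rcases Finset.mem_insert.1 ht' with rfl | ht'T
          · refine ⟨?_, ?_, ?_⟩
            · intro he
              exact hg (Finset.mem_image.2 ⟨t, htT, he⟩)
            · intro he
              exact hh (Finset.mem_image.2 ⟨t, htT, he⟩)
            · intro he
              exact hgh (Finset.mem_image.2 ⟨t, htT, he⟩)
          · exact hdist t htT t' ht'T hne
    have heq := hmax _ hPT' (Finset.subset_insert _ _)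
    have htrT : tr ∈ T := heq ▸ Finset.mem_insert_self tr T
    exact hg (Finset.mem_image.2 ⟨tr, htrT, rfl⟩)
  obtain ⟨K, h1K, hKinv, hKmul, hKcompl, h2k, hKlow, hK1, hK2, hlast⟩ :=
    key A B C m hAcard hBcard hCcard' hmn hABC
  have hkpos : 0 < K.card := Finset.card_pos.2 ⟨1, h1K⟩
  -- first conclusion
  refine ⟨⟨K.card, by omega⟩, ?_, ?_⟩
  · -- subgroup of index 2
    let Ksub : Subgroup G :=
      { carrier := ↑K
        one_mem' := by simpa using h1K
        mul_mem' := fun hx hy => hKmul _ hx _ hy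
        inv_mem' := fun hx => hKinv _ hx }
    refine ⟨Ksub, ?_⟩
    have h1 : Nat.card Ksub = K.card := by
      have h0 : Nat.card Ksub = Nat.card (↑K : Set G) := rfl
      rw [h0, Nat.card_coe_set_eq, Set.ncard_coe_finset]
    have h2 := Subgroup.card_mul_index Ksub
    rw [h1, Nat.card_eq_fintype_card, ← hn] at h2
    have : K.card * Ksub.index = K.card * 2 := by omega
    exact Nat.eq_of_mul_eq_mul_left hkpos this
  · -- parity
    have hmpos : 0 < m := by omega
    obtain ⟨a₀, ha₀⟩ := Finset.card_pos.1 (hAcard ▸ hmpos)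
    obtain ⟨b₀, hb₀⟩ := Finset.card_pos.1 (hBcard ▸ hmpos)
    set ψ : G → ZMod 2 := fun g => if g ∈ K then 0 else 1 with hψdef
    have hψK : ∀ g, g ∈ K → ψ g = 0 := fun g hg => if_pos hg
    have hψN : ∀ g, g ∉ K → ψ g = 1 := fun g hg => if_neg hg
    have hψinv : ∀ g, ψ g⁻¹ = ψ g := by
      intro g
      by_cases hg : g ∈ K
      · rw [hψK _ hg, hψK _ (hKinv g hg)]
      · have h1 : g⁻¹ ∉ K := by
          intro hc
          exact hg (by simpa using hKinv _ hc)
        rw [hψN _ hg, hψN _ h1]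
    have hψmul : ∀ g h, ψ (g * h) = ψ g + ψ h := by
      intro g h
      by_cases hg : g ∈ K <;> by_cases hh : h ∈ K
      · rw [hψK _ hg, hψK _ hh, hψK _ (hKmul g hg h hh)]
        norm_num
      · have h1 : g * h ∉ K := by
          intro hc
          have := hKmul _ (hKinv g hg) _ hc
          simp only [inv_mul_cancel_left] at this
          exact hh this
        rw [hψK _ hg, hψN _ hh, hψN _ h1, zero_add]
      · have h1 : g * h ∉ K := by
          intro hc
          have := hKmul _ hc _ (hKinv h hh)
          simp only [mul_inv_cancel_right] at this
          exact hg this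
        rw [hψN _ hg, hψK _ hh, hψN _ h1, add_zero]
      · rw [hψN _ hg, hψN _ hh, hψK _ (hKcompl g h hg hh)]
        decide
    have hsum0 : (∑ t ∈ T, (ψ t.1 + ψ t.2.1 + ψ t.2.2)) = 0 := by
      apply Finset.sum_eq_zero
      intro t ht
      obtain ⟨p, _, rfl⟩ := Finset.mem_image.1 (hsub ht)
      show ψ p.1 + ψ p.2 + ψ (p.1 * p.2) = 0
      rw [hψmul]
      have hgen : ∀ x y : ZMod 2, x + y + (x + y) = 0 := by decide
      exact hgen _ _
    have hsplit : (∑ t ∈ T, (ψ t.1 + ψ t.2.1 + ψ t.2.2))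
        = (∑ g ∈ Rows, ψ g) + (∑ g ∈ Cols, ψ g) + (∑ g ∈ Syms, ψ g) := by
      rw [Finset.sum_add_distrib, Finset.sum_add_distrib]
      rw [hRows, hCols, hSyms]
      rw [Finset.sum_image hinj1, Finset.sum_image hinj2, Finset.sum_image hinj3]
    have e1 : (∑ g ∈ Rows, ψ g) + (∑ g ∈ Cols, ψ g) + (∑ g ∈ Syms, ψ g) = 0 := by
      rw [← hsplit, hsum0]
    have hU : (∑ g : G, ψ g) = ((K.card : ℕ) : ZMod 2) := by
      rw [hψdef]
      rw [Finset.sum_ite, Finset.sum_const, Finset.sum_const, smul_zero, zero_add,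
        nsmul_eq_mul, mul_one]
      have hfe : Finset.univ.filter (fun g : G => ¬ g ∈ K) = Kᶜ := by
        ext g; simp [Finset.mem_compl]
      rw [hfe, Finset.card_compl]
      congr 1
      omega
    have hsumA : (∑ g ∈ A, ψ g) = (m : ZMod 2) * ψ a₀ := by
      have hcst : ∀ a ∈ A, ψ a = ψ a₀ := by
        intro a ha
        have h1 : a = a₀ * (a₀⁻¹ * a) := by group
        rw [h1, hψmul, hψK _ (hK1 a₀ ha₀ a ha), add_zero]
      rw [Finset.sum_congr rfl hcst, Finset.sum_const, hAcard, nsmul_eq_mul]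
    have hsumB : (∑ g ∈ B, ψ g) = (m : ZMod 2) * ψ b₀ := by
      have hcst : ∀ b ∈ B, ψ b = ψ b₀ := by
        intro b hb
        have h1 : b = (b * b₀⁻¹) * b₀ := by group
        rw [h1, hψmul, hψK _ (hK2 b hb b₀ hb₀), zero_add]
      rw [Finset.sum_congr rfl hcst, Finset.sum_const, hBcard, nsmul_eq_mul]
    have hsumC : (∑ g ∈ C, ψ g) = (m : ZMod 2) * (ψ a₀ + ψ b₀ + 1) := by
      have hcst : ∀ c ∈ C, ψ c = ψ a₀ + ψ b₀ + 1 := by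
        intro c hc
        have hnot : a₀⁻¹ * (c * b₀⁻¹) ∉ K := fun hw => hlast a₀ ha₀ b₀ hb₀ c hw hc
        have h1 : ψ (a₀⁻¹ * (c * b₀⁻¹)) = 1 := hψN _ hnot
        rw [hψmul, hψmul, hψinv, hψinv] at h1
        have hgen : ∀ x y z : ZMod 2, x + (z + y) = 1 → z = x + y + 1 := by decide
        exact hgen _ _ _ h1
      rw [Finset.sum_congr rfl hcst, Finset.sum_const, hCcard', nsmul_eq_mul]
    have e3 : (∑ g ∈ A, ψ g) + (∑ g ∈ B, ψ g) + (∑ g ∈ C, ψ g)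
        = (∑ g : G, ψ g) + (∑ g : G, ψ g) + (∑ g : G, ψ g) := by
      have c1 := Finset.sum_add_sum_compl Rows ψ
      have c2 := Finset.sum_add_sum_compl Cols ψ
      have c3 := Finset.sum_add_sum_compl Syms ψ
      rw [hA, hB, hC]
      linear_combination c1 + c2 + c3 - e1
    rw [hsumA, hsumB, hsumC, hU] at e3
    have hfin : (m : ZMod 2) = ((K.card : ℕ) : ZMod 2) := by
      have hgen : ∀ mm p q kk : ZMod 2,
          mm * p + mm * q + mm * (p + q + 1) = kk + kk + kk → mm = kk := by decide
      exact hgen _ _ _ _ e3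
    have hmod : m ≡ K.card [MOD 2] := (ZMod.natCast_eq_natCast_iff _ _ _).1 hfin
    have hmod2 : m % 2 = K.card % 2 := hmod
    rw [Nat.even_iff]
    omega
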